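/- Let G = (V⁺, V⁻; E) be a simple bipartite graph with edge weights w : E → ℝ and let μ be a matching in G of size k. If μ has minimum weight among all matchings of size k in G, then the auxiliary weighted graph (G_μ, w_μ) contains no directed cycle of negative weight. Moreover, when |V⁺| = |V⁻| = k (so μ is a perfect matching), the converse also holds: μ is a minimum-weight perfect matching in (G, w) if and only if (G_μ, w_μ) has no negative cycle. -/

import Mathlib

/-!  Common setup: weighted bipartite graphs `G = (V⁺, V⁻; E)` with `V⁺ = α`, `V⁻ = β`,
edges directed from `V⁺` to `V⁻`, auxiliary graphs of matchings, walks and cycles. -/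

variable {α β : Type*}

/-- Directed adjacency of the auxiliary graph `G_μ`: non-matching edges go from `V⁺` to `V⁻`,
matching edges are reversed. -/
def auxAdj (E μ : Finset (α × β)) : α ⊕ β → α ⊕ β → Prop
  | Sum.inl u, Sum.inr v => (u, v) ∈ E ∧ (u, v) ∉ μ
  | Sum.inr v, Sum.inl u => (u, v) ∈ μ
  | _, _ => False

/-- The auxiliary weight `w_μ`, as a function on pairs of vertices. -/
def auxW (w : α × β → ℝ) : α ⊕ β → α ⊕ β → ℝ
  | Sum.inl u, Sum.inr v => w (u, v)
  | Sum.inr v, Sum.inl u => - w (u, v)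
  | _, _ => 0

/-- Weight of a walk, given by its list of vertices. -/
def walkWeight {V : Type*} (W : V → V → ℝ) (l : List V) : ℝ :=
  ((l.zip l.tail).map fun p => W p.1 p.2).sum

/-- A (simple) directed path from `s` to `t`, given by its list of vertices. -/
def IsDiPath {V : Type*} (adj : V → V → Prop) (s t : V) (l : List V) : Prop :=
  l.head? = some s ∧ l.getLast? = some t ∧ l.Chain' adj ∧ l.Nodup

/-- A (simple) directed cycle, given by the list of its vertices (the closing edge
from the last vertex back to the first is implicit). -/
def IsDiCycle {V : Type*} (adj : V → V → Prop) (l : List V) : Prop :=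
  l ≠ [] ∧ l.Nodup ∧ (l ++ l.take 1).Chain' adj

/-- Total auxiliary weight of a directed cycle (including the closing edge). -/
def cycleWeight {V : Type*} (W : V → V → ℝ) (l : List V) : ℝ :=
  walkWeight W (l ++ l.take 1)

/-- The underlying undirected edge of a dart of the auxiliary graph. -/
def undEdge : (α ⊕ β) × (α ⊕ β) → Option (α × β)
  | (Sum.inl u, Sum.inr v) => some (u, v)
  | (Sum.inr v, Sum.inl u) => some (u, v)
  | _ => none

/-- The set of underlying edges of `G` used by a walk in the auxiliary graph. -/
def usedEdges [DecidableEq α] [DecidableEq β] (l : List (α ⊕ β)) : Finset (α × β) :=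
  ((l.zip l.tail).filterMap undEdge).toFinset

/-- An edge set is a matching if every vertex appears at most once. -/
def IsMatching (μ : Finset (α × β)) : Prop :=
  ∀ e ∈ μ, ∀ f ∈ μ, (e.1 = f.1 ∨ e.2 = f.2) → e = f

/-- A perfect matching: a matching contained in `E` covering every vertex. -/
def IsPerfectMatching (E μ : Finset (α × β)) : Prop :=
  μ ⊆ E ∧ IsMatching μ ∧ (∀ u : α, ∃ v : β, (u, v) ∈ μ) ∧ (∀ v : β, ∃ u : α, (u, v) ∈ μ)

/-- The weight of a matching. -/
def matchingWeight (w : α × β → ℝ) (μ : Finset (α × β)) : ℝ := ∑ e ∈ μ, w e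

/-- A minimum-weight perfect matching. -/
def IsMinPerfectMatching (E : Finset (α × β)) (w : α × β → ℝ) (μ : Finset (α × β)) : Prop :=
  IsPerfectMatching E μ ∧
    ∀ ν : Finset (α × β), IsPerfectMatching E ν → matchingWeight w μ ≤ matchingWeight w ν

/-- `p` is a potential for `(G_μ, w_μ)`: all reduced weights are nonnegative. -/
def IsPotential (E μ : Finset (α × β)) (w : α × β → ℝ) (p : α ⊕ β → ℝ) : Prop :=
  ∀ x y : α ⊕ β, auxAdj E μ x y → auxW w x y + p x - p y ≥ 0

/-! ### Auxiliary material -/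

section walks
variable {V : Type*} (W : V → V → ℝ)

lemma walkWeight_single' (x : V) : walkWeight W [x] = 0 := rfl
lemma walkWeight_pair' (x y : V) : walkWeight W [x, y] = W x y := by
  simp [walkWeight]

lemma walkWeight_cons_cons' (a b : V) (l : List V) :
    walkWeight W (a :: b :: l) = W a b + walkWeight W (b :: l) := by
  simp [walkWeight]

lemma walkWeight_append' (l₁ : List V) (x : V) (l₂ : List V) :
    walkWeight W (l₁ ++ x :: l₂) = walkWeight W (l₁ ++ [x]) + walkWeight W (x :: l₂) := by
  induction l₁ with
  | nil => simp [walkWeight_single']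
  | cons a t ih =>
    cases t with
    | nil => simp [walkWeight_cons_cons', walkWeight_pair', walkWeight_single']
    | cons b t' =>
      have h1 : (a :: b :: t') ++ x :: l₂ = a :: b :: (t' ++ x :: l₂) := by simp
      have h2 : (a :: b :: t') ++ [x] = a :: b :: (t' ++ [x]) := by simp
      rw [h1, h2, walkWeight_cons_cons', walkWeight_cons_cons']
      have := ih
      simp only [List.cons_append] at this
      rw [this]; ring

lemma walkWeight_concat' (l : List V) (x y : V) (h : l.getLast? = some x) :
    walkWeight W (l ++ [y]) = walkWeight W l + W x y := by
  obtain ⟨l', rfl⟩ := List.getLast?_eq_some_iff.mp h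
  rw [List.append_assoc, List.singleton_append, walkWeight_append', walkWeight_pair']

lemma map_fst_zip_tail : ∀ l : List V, (l.zip l.tail).map Prod.fst = l.dropLast
  | [] => rfl
  | [_] => rfl
  | a :: b :: t => by
    have := map_fst_zip_tail (b :: t)
    simp only [List.tail_cons] at this ⊢
    rw [List.zip_cons_cons, List.map_cons, this]
    rfl

lemma map_snd_zip_tail : ∀ l : List V, (l.zip l.tail).map Prod.snd = l.tail
  | [] => rfl
  | [_] => rfl
  | a :: b :: t => by
    have := map_snd_zip_tail (b :: t)
    simp only [List.tail_cons] at this ⊢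
    rw [List.zip_cons_cons, List.map_cons, this]

lemma chain'_darts {adj : V → V → Prop} : ∀ {l : List V}, l.Chain' adj →
    ∀ d ∈ l.zip l.tail, adj d.1 d.2
  | [], _, d, hd => by simp at hd
  | [_], _, d, hd => by simp at hd
  | a :: b :: t, h, d, hd => by
    replace h := List.isChain_cons_cons.mp h
    simp only [List.tail_cons, List.zip_cons_cons, List.mem_cons] at hd
    rcases hd with rfl | hd
    · exact h.1
    · exact chain'_darts h.2 d hd

end walks

/-- No negative cycle implies existence of a potential (generic digraph version). -/
lemma exists_pot {V : Type*} [Fintype V] [DecidableEq V] (adj : V → V → Prop) (W : V → V → ℝ)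
    (h : ∀ C : List V, IsDiCycle adj C → 0 ≤ cycleWeight W C) :
    ∃ p : V → ℝ, ∀ x y, adj x y → p y ≤ p x + W x y := by
  classical
  set S : V → Finset ℝ := fun x =>
    ((Finset.univ : Finset {l : List V // l.Nodup}).filter
      (fun l => l.1 ≠ [] ∧ l.1.Chain' adj ∧ l.1.getLast? = some x)).image
      (fun l => walkWeight W l.1) with hS
  have hmem : ∀ (x : V) (l : List V), l.Nodup → l ≠ [] → l.Chain' adj → l.getLast? = some x →
      walkWeight W l ∈ S x := by
    intro x l hnd hne hch hlast
    simp only [hS, Finset.mem_image, Finset.mem_filter, Finset.mem_univ, true_and]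
    exact ⟨⟨l, hnd⟩, ⟨hne, hch, hlast⟩, rfl⟩
  have hne : ∀ x : V, (S x).Nonempty := by
    intro x
    exact ⟨0, hmem x [x] (by simp) (by simp) (List.isChain_singleton x) rfl⟩
  refine ⟨fun x => (S x).min' (hne x), ?_⟩
  intro x y hadj
  show (S y).min' (hne y) ≤ (S x).min' (hne x) + W x y
  obtain ⟨l, hl, hval⟩ : ∃ l : {l : List V // l.Nodup},
      (l.1 ≠ [] ∧ l.1.Chain' adj ∧ l.1.getLast? = some x) ∧
      walkWeight W l.1 = (S x).min' (hne x) := by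
    have := (S x).min'_mem (hne x)
    simp only [hS, Finset.mem_image, Finset.mem_filter, Finset.mem_univ, true_and] at this
    obtain ⟨l, h1, h2⟩ := this
    exact ⟨l, h1, h2⟩
  obtain ⟨lne, lch, llast⟩ := hl
  obtain ⟨l, hnd⟩ := l
  simp only at lne lch llast hval
  by_cases hy : y ∈ l
  · obtain ⟨l₁, l₂, rfl⟩ := List.append_of_mem hy
    have hnd1 : (l₁ ++ [y]).Nodup := by
      refine List.Sublist.nodup ?_ hnd
      exact (List.append_sublist_append_left l₁).mpr
        (List.cons_sublist_cons.mpr (List.nil_sublist l₂))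
    have hch' := List.isChain_append.mp lch
    have hch1 : (l₁ ++ [y]).Chain' adj := by
      refine List.isChain_append.mpr ⟨hch'.1, List.isChain_singleton y, ?_⟩
      intro a ha b hb
      simp only [List.head?_cons, Option.mem_def, Option.some.injEq] at hb
      subst hb
      exact hch'.2.2 a ha y rfl
    have hlast2 : (y :: l₂).getLast? = some x := by
      rw [List.getLast?_append] at llast
      simpa using llast
    have hpy : (fun x => (S x).min' (hne x)) y ≤ walkWeight W (l₁ ++ [y]) :=
      Finset.min'_le _ _ (hmem y (l₁ ++ [y]) hnd1 (by simp) hch1 List.getLast?_concat)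
    have hcyc : IsDiCycle adj (y :: l₂) := by
      refine ⟨by simp, (List.sublist_append_right l₁ _).nodup hnd, ?_⟩
      simp only [List.take_succ_cons, List.take_zero]
      refine List.isChain_append.mpr ⟨hch'.2.1, List.isChain_singleton y, ?_⟩
      intro a ha b hb
      simp only [List.head?_cons, Option.mem_def, Option.some.injEq] at hb
      subst hb
      rw [hlast2] at ha
      simp only [Option.mem_def, Option.some.injEq] at ha
      subst ha
      exact hadj
    have hcw := h _ hcyc
    have hcw' : cycleWeight W (y :: l₂) = walkWeight W (y :: l₂) + W x y := by
      unfold cycleWeight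
      simp only [List.take_succ_cons, List.take_zero]
      exact walkWeight_concat' W _ x y hlast2
    have hsplit : walkWeight W (l₁ ++ y :: l₂) =
        walkWeight W (l₁ ++ [y]) + walkWeight W (y :: l₂) := walkWeight_append' W l₁ y l₂
    rw [hcw'] at hcw
    rw [hsplit] at hval
    linarith
  · have hnd1 : (l ++ [y]).Nodup := by
      rw [List.nodup_append]
      exact ⟨hnd, List.nodup_singleton y, by simpa using fun a ha (h : a = y) => hy (h ▸ ha)⟩
    have hch1 : (l ++ [y]).Chain' adj := by
      refine List.isChain_append.mpr ⟨lch, List.isChain_singleton y, ?_⟩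
      intro a ha b hb
      simp only [List.head?_cons, Option.mem_def, Option.some.injEq] at hb
      subst hb
      rw [llast] at ha
      simp only [Option.mem_def, Option.some.injEq] at ha
      subst ha
      exact hadj
    have := Finset.min'_le _ _ (hmem y (l ++ [y]) hnd1 (by simp) hch1 List.getLast?_concat)
    have hconc := walkWeight_concat' W l x y llast
    linarith

/-! ### Forward / backward darts -/

def fwdE : (α ⊕ β) × (α ⊕ β) → Option (α × β)
  | (Sum.inl u, Sum.inr v) => some (u, v)
  | _ => none

def bwdE : (α ⊕ β) × (α ⊕ β) → Option (α × β)
  | (Sum.inr v, Sum.inl u) => some (u, v)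
  | _ => none

lemma fwdE_eq_some {d : (α ⊕ β) × (α ⊕ β)} {e : α × β} :
    fwdE d = some e ↔ d = (Sum.inl e.1, Sum.inr e.2) := by
  obtain ⟨x, y⟩ := d
  cases x <;> cases y <;> simp [fwdE, Prod.ext_iff] <;> aesop

lemma bwdE_eq_some {d : (α ⊕ β) × (α ⊕ β)} {e : α × β} :
    bwdE d = some e ↔ d = (Sum.inr e.2, Sum.inl e.1) := by
  obtain ⟨x, y⟩ := d
  cases x <;> cases y <;> simp [bwdE, Prod.ext_iff] <;> aesop

lemma darts_sum (E μ : Finset (α × β)) (w : α × β → ℝ) :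
    ∀ D : List ((α ⊕ β) × (α ⊕ β)), (∀ d ∈ D, auxAdj E μ d.1 d.2) →
    (D.map fun d => auxW w d.1 d.2).sum
      = ((D.filterMap fwdE).map w).sum - ((D.filterMap bwdE).map w).sum
  | [], _ => by simp
  | d :: D, h => by
    have hD := darts_sum E μ w D (fun d hd => h d (List.mem_cons_of_mem _ hd))
    have hd := h d (List.mem_cons_self)
    obtain ⟨x, y⟩ := d
    cases x with
    | inl u =>
      cases y with
      | inl u' => exact absurd hd (by simp [auxAdj])
      | inr v =>
        have h1 : List.filterMap fwdE ((Sum.inl u, Sum.inr v) :: D)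
            = (u, v) :: List.filterMap fwdE D := by
          simp [List.filterMap_cons]; rfl
        have h2 : List.filterMap bwdE ((Sum.inl u, Sum.inr v) :: D)
            = List.filterMap bwdE D := by
          simp [List.filterMap_cons]; rfl
        rw [List.map_cons, List.sum_cons, hD, h1, h2, List.map_cons, List.sum_cons]
        show w (u, v) + _ = _
        ring
    | inr v =>
      cases y with
      | inr v' => exact absurd hd (by simp [auxAdj])
      | inl u =>
        have h1 : List.filterMap fwdE ((Sum.inr v, Sum.inl u) :: D)
            = List.filterMap fwdE D := by
          simp [List.filterMap_cons]; rfl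
        have h2 : List.filterMap bwdE ((Sum.inr v, Sum.inl u) :: D)
            = (u, v) :: List.filterMap bwdE D := by
          simp [List.filterMap_cons]; rfl
        rw [List.map_cons, List.sum_cons, hD, h1, h2, List.map_cons, List.sum_cons]
        show - w (u, v) + _ = _
        ring

/-- Toggling a directed cycle of the auxiliary graph produces a matching of the same
cardinality whose weight differs by the cycle weight. -/
lemma cycle_toggle [DecidableEq α] [DecidableEq β]
    (E μ : Finset (α × β)) (w : α × β → ℝ) (hμE : μ ⊆ E) (hμ : IsMatching μ)
    (C : List (α ⊕ β)) (hC : IsDiCycle (auxAdj E μ) C) :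
    ∃ ν : Finset (α × β), ν ⊆ E ∧ IsMatching ν ∧ ν.card = μ.card ∧
      matchingWeight w ν = matchingWeight w μ + cycleWeight (auxW w) C := by
  obtain ⟨hne, hnd, hch⟩ := hC
  obtain ⟨c, cs, rfl⟩ : ∃ c cs, C = c :: cs := by
    cases C with
    | nil => exact absurd rfl hne
    | cons c cs => exact ⟨c, cs, rfl⟩
  set C : List (α ⊕ β) := c :: cs with hCdef
  have htake : C.take 1 = [c] := rfl
  set C' : List (α ⊕ β) := C ++ [c] with hC'def
  set D : List ((α ⊕ β) × (α ⊕ β)) := C'.zip C'.tail with hDdef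
  have hCC' : C ++ C.take 1 = C' := rfl
  have hfst : D.map Prod.fst = C := by
    rw [hDdef, map_fst_zip_tail, hC'def, List.dropLast_concat]
  have hsnd : D.map Prod.snd = cs ++ [c] := by
    rw [hDdef, map_snd_zip_tail, hC'def, hCdef]
    rfl
  have hperm : (cs ++ [c]).Perm C := List.perm_append_singleton c cs
  have hsnd_nodup : (cs ++ [c]).Nodup := hperm.nodup_iff.mpr hnd
  have hfst_nodup : (D.map Prod.fst).Nodup := hfst ▸ hnd
  have hsnd_nodup' : (D.map Prod.snd).Nodup := hsnd ▸ hsnd_nodup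
  have hD_nodup : D.Nodup := hfst_nodup.of_map
  have hdarts : ∀ d ∈ D, auxAdj E μ d.1 d.2 := by
    intro d hd
    exact chain'_darts (hCC' ▸ hch) d hd
  -- source and target membership
  have hsrc : ∀ d ∈ D, d.1 ∈ C := by
    intro d hd; rw [← hfst]; exact List.mem_map_of_mem hd
  have htgt : ∀ d ∈ D, d.2 ∈ C := by
    intro d hd
    have : d.2 ∈ cs ++ [c] := hsnd ▸ List.mem_map_of_mem hd
    exact hperm.mem_iff.mp this
  have hsrc_ex : ∀ x ∈ C, ∃ d ∈ D, d.1 = x := by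
    intro x hx
    rw [← hfst] at hx
    obtain ⟨d, hd, h⟩ := List.mem_map.mp hx
    exact ⟨d, hd, h⟩
  have htgt_ex : ∀ x ∈ C, ∃ d ∈ D, d.2 = x := by
    intro x hx
    have : x ∈ cs ++ [c] := hperm.mem_iff.mpr hx
    rw [← hsnd] at this
    obtain ⟨d, hd, h⟩ := List.mem_map.mp this
    exact ⟨d, hd, h⟩
  -- the forward and backward edge lists
  set F : List (α × β) := D.filterMap fwdE with hFdef
  set B : List (α × β) := D.filterMap bwdE with hBdef
  have hFmem : ∀ {e : α × β}, e ∈ F ↔ (Sum.inl e.1, Sum.inr e.2) ∈ D := by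
    intro e
    rw [hFdef, List.mem_filterMap]
    constructor
    · rintro ⟨d, hd, h⟩; rwa [fwdE_eq_some.mp h] at hd
    · intro h; exact ⟨_, h, fwdE_eq_some.mpr rfl⟩
  have hBmem : ∀ {e : α × β}, e ∈ B ↔ (Sum.inr e.2, Sum.inl e.1) ∈ D := by
    intro e
    rw [hBdef, List.mem_filterMap]
    constructor
    · rintro ⟨d, hd, h⟩; rwa [bwdE_eq_some.mp h] at hd
    · intro h; exact ⟨_, h, bwdE_eq_some.mpr rfl⟩
  have hF_nodup : F.Nodup := by
    refine List.Nodup.filterMap ?_ hD_nodup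
    intro a a' b hb hb'
    rw [Option.mem_def, fwdE_eq_some] at hb hb'
    rw [hb, hb']
  have hB_nodup : B.Nodup := by
    refine List.Nodup.filterMap ?_ hD_nodup
    intro a a' b hb hb'
    rw [Option.mem_def, bwdE_eq_some] at hb hb'
    rw [hb, hb']
  -- basic facts
  have factF : ∀ e ∈ F, e ∈ E ∧ e ∉ μ := by
    intro e he
    have := hdarts _ (hFmem.mp he)
    simpa [auxAdj] using this
  have factB : ∀ e ∈ B, e ∈ μ := by
    intro e he
    have := hdarts _ (hBmem.mp he)
    simpa [auxAdj] using this
  have factF_fst : ∀ e ∈ F, ∀ f ∈ F, e.1 = f.1 → e = f := by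
    intro e he f hf h
    have := List.inj_on_of_nodup_map hfst_nodup (hFmem.mp he) (hFmem.mp hf) (by simp [h])
    have h2 : e.1 = f.1 ∧ e.2 = f.2 := by simpa [Prod.ext_iff] using this
    exact Prod.ext_iff.mpr h2
  have factF_snd : ∀ e ∈ F, ∀ f ∈ F, e.2 = f.2 → e = f := by
    intro e he f hf h
    have := List.inj_on_of_nodup_map hsnd_nodup' (hFmem.mp he) (hFmem.mp hf) (by simp [h])
    have h2 : e.1 = f.1 ∧ e.2 = f.2 := by simpa [Prod.ext_iff] using this
    exact Prod.ext_iff.mpr h2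
  have factF_exists : ∀ u : α, Sum.inl u ∈ C → ∃ v, (u, v) ∈ F := by
    intro u hu
    obtain ⟨d, hd, hd1⟩ := hsrc_ex _ hu
    obtain ⟨x, y⟩ := d
    cases y with
    | inl u' => exact absurd (hdarts _ hd) (by simp only at hd1; rw [hd1]; simp [auxAdj])
    | inr v =>
      refine ⟨v, hFmem.mpr ?_⟩
      simp only at hd1
      rwa [hd1] at hd
  have factB_exists : ∀ u : α, Sum.inl u ∈ C → ∃ v, (u, v) ∈ B := by
    intro u hu
    obtain ⟨d, hd, hd2⟩ := htgt_ex _ hu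
    obtain ⟨x, y⟩ := d
    cases x with
    | inl u' => exact absurd (hdarts _ hd) (by simp only at hd2; rw [hd2]; simp [auxAdj])
    | inr v =>
      refine ⟨v, hBmem.mpr ?_⟩
      simp only at hd2
      rwa [hd2] at hd
  have factF_exists' : ∀ v : β, Sum.inr v ∈ C → ∃ u, (u, v) ∈ F := by
    intro v hv
    obtain ⟨d, hd, hd2⟩ := htgt_ex _ hv
    obtain ⟨x, y⟩ := d
    cases x with
    | inr v' => exact absurd (hdarts _ hd) (by simp only at hd2; rw [hd2]; simp [auxAdj])
    | inl u =>
      refine ⟨u, hFmem.mpr ?_⟩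
      simp only at hd2
      rwa [hd2] at hd
  have factB_exists' : ∀ v : β, Sum.inr v ∈ C → ∃ u, (u, v) ∈ B := by
    intro v hv
    obtain ⟨d, hd, hd1⟩ := hsrc_ex _ hv
    obtain ⟨x, y⟩ := d
    cases y with
    | inr v' => exact absurd (hdarts _ hd) (by simp only at hd1; rw [hd1]; simp [auxAdj])
    | inl u =>
      refine ⟨u, hBmem.mpr ?_⟩
      simp only at hd1
      rwa [hd1] at hd
  have factF_memC : ∀ e ∈ F, Sum.inl e.1 ∈ C ∧ Sum.inr e.2 ∈ C := by
    intro e he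
    exact ⟨hsrc _ (hFmem.mp he), htgt _ (hFmem.mp he)⟩
  have factB_memC : ∀ e ∈ B, Sum.inl e.1 ∈ C ∧ Sum.inr e.2 ∈ C := by
    intro e he
    exact ⟨htgt _ (hBmem.mp he), hsrc _ (hBmem.mp he)⟩
  have fact9 : ∀ e ∈ μ, Sum.inl e.1 ∈ C → e ∈ B := by
    intro e he hu
    obtain ⟨v', hv'⟩ := factB_exists e.1 hu
    have : e = (e.1, v') := hμ e he (e.1, v') (factB _ hv') (Or.inl rfl)
    rw [this]; exact hv'
  have fact10 : ∀ e ∈ μ, Sum.inr e.2 ∈ C → e ∈ B := by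
    intro e he hv
    obtain ⟨u', hu'⟩ := factB_exists' e.2 hv
    have : e = (u', e.2) := hμ e he (u', e.2) (factB _ hu') (Or.inr rfl)
    rw [this]; exact hu'
  -- the new matching
  set Ff : Finset (α × β) := F.toFinset with hFfdef
  set Bf : Finset (α × β) := B.toFinset with hBfdef
  have hFf : ∀ {e : α × β}, e ∈ Ff ↔ e ∈ F := fun {e} => List.mem_toFinset
  have hBf : ∀ {e : α × β}, e ∈ Bf ↔ e ∈ B := fun {e} => List.mem_toFinset
  have hBfμ : Bf ⊆ μ := fun e he => factB e (hBf.mp he)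
  set ν : Finset (α × β) := (μ \ Bf) ∪ Ff with hνdef
  have hνE : ν ⊆ E := by
    intro e he
    rcases Finset.mem_union.mp he with h | h
    · exact hμE (Finset.mem_sdiff.mp h).1
    · exact (factF e (hFf.mp h)).1
  have hνmatch : IsMatching ν := by
    intro e he f hf hshare
    rcases Finset.mem_union.mp he with he | he <;> rcases Finset.mem_union.mp hf with hf | hf
    · exact hμ e (Finset.mem_sdiff.mp he).1 f (Finset.mem_sdiff.mp hf).1 hshare
    · exfalso
      obtain ⟨heμ, heB⟩ := Finset.mem_sdiff.mp he
      rcases hshare with h | h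
      · exact heB (hBf.mpr (fact9 e heμ (h ▸ (factF_memC f (hFf.mp hf)).1)))
      · exact heB (hBf.mpr (fact10 e heμ (h ▸ (factF_memC f (hFf.mp hf)).2)))
    · exfalso
      obtain ⟨hfμ, hfB⟩ := Finset.mem_sdiff.mp hf
      rcases hshare with h | h
      · exact hfB (hBf.mpr (fact9 f hfμ (h ▸ (factF_memC e (hFf.mp he)).1)))
      · exact hfB (hBf.mpr (fact10 f hfμ (h ▸ (factF_memC e (hFf.mp he)).2)))
    · rcases hshare with h | h
      · exact factF_fst e (hFf.mp he) f (hFf.mp hf) h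
      · exact factF_snd e (hFf.mp he) f (hFf.mp hf) h
  have hdisj : Disjoint (μ \ Bf) Ff := by
    rw [Finset.disjoint_right]
    intro e he hmem
    exact (factF e (hFf.mp he)).2 (Finset.mem_sdiff.mp hmem).1
  have himg : Ff.image Prod.fst = Bf.image Prod.fst := by
    ext u
    simp only [Finset.mem_image]
    constructor
    · rintro ⟨e, he, rfl⟩
      obtain ⟨v', hv'⟩ := factB_exists e.1 (factF_memC e (hFf.mp he)).1
      exact ⟨(e.1, v'), hBf.mpr hv', rfl⟩
    · rintro ⟨e, he, rfl⟩
      obtain ⟨v', hv'⟩ := factF_exists e.1 (factB_memC e (hBf.mp he)).1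
      exact ⟨(e.1, v'), hFf.mpr hv', rfl⟩
  have hcardFB : Ff.card = Bf.card := by
    have h1 : (Ff.image Prod.fst).card = Ff.card :=
      Finset.card_image_of_injOn (fun e he f hf h =>
        factF_fst e (hFf.mp he) f (hFf.mp hf) h)
    have h2 : (Bf.image Prod.fst).card = Bf.card :=
      Finset.card_image_of_injOn (fun e he f hf h =>
        hμ e (hBfμ he) f (hBfμ hf) (Or.inl h))
    rw [← h1, ← h2, himg]
  have hνcard : ν.card = μ.card := by
    rw [hνdef, Finset.card_union_of_disjoint hdisj, Finset.card_sdiff_of_subset hBfμ, hcardFB]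
    exact Nat.sub_add_cancel (Finset.card_le_card hBfμ)
  -- the weight identity
  have hcyc : cycleWeight (auxW w) C = (∑ e ∈ Ff, w e) - ∑ e ∈ Bf, w e := by
    have h1 : cycleWeight (auxW w) C = (D.map fun d => auxW w d.1 d.2).sum := rfl
    rw [h1, darts_sum E μ w D hdarts, ← hFdef, ← hBdef,
      ← List.sum_toFinset w hF_nodup, ← List.sum_toFinset w hB_nodup]
  have hw : matchingWeight w ν = matchingWeight w μ + cycleWeight (auxW w) C := by
    have h1 : matchingWeight w ν = (∑ e ∈ μ \ Bf, w e) + ∑ e ∈ Ff, w e := by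
      rw [hνdef]; exact Finset.sum_union hdisj
    have h2 : ∑ e ∈ μ \ Bf, w e = (∑ e ∈ μ, w e) - ∑ e ∈ Bf, w e :=
      Finset.sum_sdiff_eq_sub hBfμ
    rw [h1, h2, hcyc]
    show _ = (∑ e ∈ μ, w e) + _
    ring
  exact ⟨ν, hνE, hνmatch, hνcard, hw⟩

lemma perfect_of_card [Fintype α] [Fintype β] [DecidableEq α] [DecidableEq β]
    (E ν : Finset (α × β)) (hνE : ν ⊆ E) (hν : IsMatching ν)
    (hα : Fintype.card α = ν.card) (hβ : Fintype.card β = ν.card) :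
    IsPerfectMatching E ν := by
  refine ⟨hνE, hν, ?_, ?_⟩
  · have h1 : (ν.image Prod.fst).card = ν.card :=
      Finset.card_image_of_injOn (fun e he f hf h => hν e he f hf (Or.inl h))
    have huniv : ν.image Prod.fst = Finset.univ :=
      Finset.eq_univ_of_card _ (by rw [h1, hα])
    intro u
    have : u ∈ ν.image Prod.fst := huniv ▸ Finset.mem_univ u
    obtain ⟨e, he, h⟩ := Finset.mem_image.mp this
    exact ⟨e.2, by rwa [← h, Prod.mk.eta]⟩
  · have h1 : (ν.image Prod.snd).card = ν.card :=
      Finset.card_image_of_injOn (fun e he f hf h => hν e he f hf (Or.inr h))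
    have huniv : ν.image Prod.snd = Finset.univ :=
      Finset.eq_univ_of_card _ (by rw [h1, hβ])
    intro v
    have : v ∈ ν.image Prod.snd := huniv ▸ Finset.mem_univ v
    obtain ⟨e, he, h⟩ := Finset.mem_image.mp this
    exact ⟨e.1, by rwa [← h, Prod.mk.eta]⟩

lemma min_of_potential [Fintype α] [Fintype β] [DecidableEq α] [DecidableEq β]
    (E μ : Finset (α × β)) (w : α × β → ℝ) (p : α ⊕ β → ℝ)
    (hpot : IsPotential E μ w p) (hμperf : IsPerfectMatching E μ) :
    ∀ ν : Finset (α × β), IsPerfectMatching E ν →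
      matchingWeight w μ ≤ matchingWeight w ν := by
  intro ν hνperf
  set q : α × β → ℝ := fun e => p (Sum.inr e.2) - p (Sum.inl e.1) with hq
  have hsum : ∀ ρ : Finset (α × β), IsPerfectMatching E ρ →
      ∑ e ∈ ρ, q e = (∑ v : β, p (Sum.inr v)) - ∑ u : α, p (Sum.inl u) := by
    rintro ρ ⟨hρE, hρm, hρa, hρb⟩
    have himg2 : ρ.image Prod.snd = Finset.univ := by
      refine Finset.eq_univ_iff_forall.mpr (fun v => ?_)
      obtain ⟨u, hu⟩ := hρb v
      exact Finset.mem_image.mpr ⟨(u, v), hu, rfl⟩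
    have himg1 : ρ.image Prod.fst = Finset.univ := by
      refine Finset.eq_univ_iff_forall.mpr (fun u => ?_)
      obtain ⟨v, hv⟩ := hρa u
      exact Finset.mem_image.mpr ⟨(u, v), hv, rfl⟩
    have h2 : ∑ e ∈ ρ, p (Sum.inr e.2) = ∑ v : β, p (Sum.inr v) := by
      rw [← himg2, Finset.sum_image (fun e he f hf h => hρm e he f hf (Or.inr h))]
    have h1 : ∑ e ∈ ρ, p (Sum.inl e.1) = ∑ u : α, p (Sum.inl u) := by
      rw [← himg1, Finset.sum_image (fun e he f hf h => hρm e he f hf (Or.inl h))]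
    rw [hq]
    rw [Finset.sum_sub_distrib, h1, h2]
  have hforward : ∀ e ∈ ν \ μ, q e ≤ w e := by
    intro e he
    obtain ⟨heν, heμ⟩ := Finset.mem_sdiff.mp he
    have hadj : auxAdj E μ (Sum.inl e.1) (Sum.inr e.2) := by
      simp only [auxAdj, Prod.mk.eta]
      exact ⟨hνperf.1 heν, heμ⟩
    have := hpot _ _ hadj
    have haux : auxW w (Sum.inl e.1) (Sum.inr e.2) = w e := by
      simp [auxW]
    rw [haux] at this
    simp only [hq]
    linarith
  have hback : ∀ e ∈ μ \ ν, w e ≤ q e := by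
    intro e he
    obtain ⟨heμ, _⟩ := Finset.mem_sdiff.mp he
    have hadj : auxAdj E μ (Sum.inr e.2) (Sum.inl e.1) := by
      simp only [auxAdj, Prod.mk.eta]
      exact heμ
    have := hpot _ _ hadj
    have haux : auxW w (Sum.inr e.2) (Sum.inl e.1) = - w e := by
      simp [auxW]
    rw [haux] at this
    simp only [hq]
    linarith
  have key1 : ∑ e ∈ ν \ μ, q e ≤ ∑ e ∈ ν \ μ, w e := Finset.sum_le_sum hforward
  have key2 : ∑ e ∈ μ \ ν, w e ≤ ∑ e ∈ μ \ ν, q e := Finset.sum_le_sum hback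
  have hν_split : ∑ e ∈ ν ∩ μ, w e + ∑ e ∈ ν \ μ, w e = ∑ e ∈ ν, w e :=
    Finset.sum_inter_add_sum_sdiff ν μ w
  have hμ_split : ∑ e ∈ μ ∩ ν, w e + ∑ e ∈ μ \ ν, w e = ∑ e ∈ μ, w e :=
    Finset.sum_inter_add_sum_sdiff μ ν w
  have hνq_split : ∑ e ∈ ν ∩ μ, q e + ∑ e ∈ ν \ μ, q e = ∑ e ∈ ν, q e :=
    Finset.sum_inter_add_sum_sdiff ν μ q
  have hμq_split : ∑ e ∈ μ ∩ ν, q e + ∑ e ∈ μ \ ν, q e = ∑ e ∈ μ, q e :=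
    Finset.sum_inter_add_sum_sdiff μ ν q
  have hqeq : ∑ e ∈ ν, q e = ∑ e ∈ μ, q e := by
    rw [hsum ν hνperf, hsum μ hμperf]
  have hinter : ∑ e ∈ ν ∩ μ, w e = ∑ e ∈ μ ∩ ν, w e := by rw [Finset.inter_comm]
  have hinterq : ∑ e ∈ ν ∩ μ, q e = ∑ e ∈ μ ∩ ν, q e := by rw [Finset.inter_comm]
  show ∑ e ∈ μ, w e ≤ ∑ e ∈ ν, w e
  linarith

/-- If `μ` is a matching of size `k` of minimum weight among all matchings
of size `k` in `G`, then `(G_μ, w_μ)` has no negative cycle. Moreover, when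
`|V⁺| = |V⁻| = k` (so `μ` is a perfect matching), `μ` is a minimum-weight perfect matching
if and only if `(G_μ, w_μ)` has no negative cycle. -/
theorem min_matching_no_negative_cycle
    [Fintype α] [Fintype β] [DecidableEq α] [DecidableEq β]
    (E μ : Finset (α × β)) (w : α × β → ℝ) (k : ℕ)
    (hμE : μ ⊆ E) (hμ : IsMatching μ) (hcard : μ.card = k) :
    ((∀ ν ⊆ E, IsMatching ν → ν.card = k → matchingWeight w μ ≤ matchingWeight w ν) →
      ∀ C : List (α ⊕ β), IsDiCycle (auxAdj E μ) C → 0 ≤ cycleWeight (auxW w) C) ∧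
    (Fintype.card α = k → Fintype.card β = k →
      ((∀ ν : Finset (α × β), IsPerfectMatching E ν →
          matchingWeight w μ ≤ matchingWeight w ν) ↔
        ∀ C : List (α ⊕ β), IsDiCycle (auxAdj E μ) C → 0 ≤ cycleWeight (auxW w) C)) := by
  constructor
  · intro hmin C hC
    by_contra hneg
    push_neg at hneg
    obtain ⟨ν, hνE, hνm, hνcard, hνw⟩ := cycle_toggle E μ w hμE hμ C hC
    have := hmin ν hνE hνm (hνcard.trans hcard)
    linarith
  · intro hα hβ
    constructor
    · intro hmin C hC
      by_contra hneg
      push_neg at hneg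
      obtain ⟨ν, hνE, hνm, hνcard, hνw⟩ := cycle_toggle E μ w hμE hμ C hC
      have hνperf : IsPerfectMatching E ν :=
        perfect_of_card E ν hνE hνm (by rw [hνcard, hcard, hα]) (by rw [hνcard, hcard, hβ])
      have := hmin ν hνperf
      linarith
    · intro hnoneg
      obtain ⟨p, hp⟩ := exists_pot (auxAdj E μ) (auxW w) hnoneg
      have hpot : IsPotential E μ w p := by
        intro x y h
        have := hp x y h
        linarith
      have hμperf : IsPerfectMatching E μ :=
        perfect_of_card E μ hμE hμ (by rw [hcard, hα]) (by rw [hcard, hβ])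
      exact min_of_potential E μ w p hpot hμperf
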